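/- arXiv:2509.08072 — 5 statements merged into one kernel-verified Lean document; each statement's English description precedes it below -/
import Mathlib

section
/- For 0 ≤ θ ≤ 1, c ≥ 1, and p ∈ ℝ³, the matrix ∇v_c^θ(p) is symmetric positive definite, and its determinant satisfies det(∇v_c^θ(p)) ≥ γ_c(p)^{−5}. -/
noncomputable section

/-- The relativistic Lorentz factor `γ_c(p) = √(1 + |p|²/c²)`. -/
def gam (c : ℝ) (p : EuclideanSpace ℝ (Fin 3)) : ℝ := Real.sqrt (1 + ‖p‖ ^ 2 / c ^ 2)

/-- The Jacobian of the interpolated velocity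
`∇v_c^θ(p) = (θ/γ_c(p) + 1−θ) I₃ − (θ/γ_c(p)³) (p_i p_j / c²)_{i,j}`. -/
def Dv (θ c : ℝ) (p : EuclideanSpace ℝ (Fin 3)) : Matrix (Fin 3) (Fin 3) ℝ :=
  (θ / gam c p + (1 - θ)) • (1 : Matrix (Fin 3) (Fin 3) ℝ) -
    (θ / (gam c p) ^ 3) • Matrix.of fun i j => p i * p j / c ^ 2

lemma cauchy3 (p0 p1 p2 x0 x1 x2 : ℝ) :
    (p0*x0 + p1*x1 + p2*x2)^2 ≤ (p0^2+p1^2+p2^2) * (x0^2+x1^2+x2^2) := by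
  nlinarith [sq_nonneg (p0*x1 - p1*x0), sq_nonneg (p0*x2 - p2*x0), sq_nonneg (p1*x2 - p2*x1)]

set_option maxHeartbeats 1000000 in
/-- `∇v_c^θ(p)` is symmetric positive definite and its determinant is at least `γ_c(p)⁻⁵`. -/
theorem stmt6 (θ c : ℝ) (hθ0 : 0 ≤ θ) (hθ1 : θ ≤ 1) (hc : 1 ≤ c)
    (p : EuclideanSpace ℝ (Fin 3)) :
    (Dv θ c p).IsSymm ∧ (Dv θ c p).PosDef ∧ (Dv θ c p).det ≥ (gam c p) ^ (-5 : ℤ) := by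
  have hc0 : (0:ℝ) < c := lt_of_lt_of_le one_pos hc
  set γ := gam c p with hγdef
  have hγ1 : 1 ≤ γ := by
    have h : (1:ℝ) ≤ 1 + ‖p‖ ^ 2 / c ^ 2 := by
      have : 0 ≤ ‖p‖ ^ 2 / c ^ 2 := by positivity
      linarith
    calc (1:ℝ) = Real.sqrt 1 := Real.sqrt_one.symm
      _ ≤ γ := Real.sqrt_le_sqrt h
  have hγ0 : 0 < γ := lt_of_lt_of_le one_pos hγ1
  have hγ2 : γ ^ 2 = 1 + ‖p‖ ^ 2 / c ^ 2 := by
    rw [hγdef, gam, Real.sq_sqrt (by positivity)]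
  have hnorm : ‖p‖ ^ 2 = p 0 ^ 2 + p 1 ^ 2 + p 2 ^ 2 := by
    rw [EuclideanSpace.norm_eq, Real.sq_sqrt (by positivity)]
    simp [Fin.sum_univ_three, Real.norm_eq_abs, sq_abs]
  set a := θ / γ + (1 - θ) with hadef
  set b := θ / γ ^ 3 with hbdef
  set s := (p 0 ^ 2 + p 1 ^ 2 + p 2 ^ 2) / c ^ 2 with hsdef
  have hs : s = γ ^ 2 - 1 := by rw [hsdef, ← hnorm, hγ2]; ring
  have hb0 : 0 ≤ b := by positivity
  have ha : 1 / γ ≤ a := by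
    have h1 : (1 - θ) / γ ≤ 1 - θ := div_le_self (by linarith) hγ1
    have h2 : 1 / γ = θ / γ + (1 - θ) / γ := by field_simp; ring
    linarith
  have ha0 : 0 < a := lt_of_lt_of_le (by positivity) ha
  have hγ3 : 1 ≤ γ ^ 3 := one_le_pow₀ hγ1
  have hm : a - b * s = θ / γ ^ 3 + (1 - θ) := by
    rw [hadef, hbdef, hs]; field_simp; ring
  have hm1 : 1 / γ ^ 3 ≤ a - b * s := by
    rw [hm]
    have h1 : (1 - θ) / γ ^ 3 ≤ 1 - θ := div_le_self (by linarith) hγ3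
    have h2 : 1 / γ ^ 3 = θ / γ ^ 3 + (1 - θ) / γ ^ 3 := by field_simp; ring
    linarith
  have hm0 : 0 < a - b * s := lt_of_lt_of_le (by positivity) hm1
  clear_value γ a b s
  have hentry : ∀ i j, Dv θ c p i j =
      a * (if i = j then 1 else 0) - b * (p i * p j / c ^ 2) := by
    intro i j
    simp [Dv, Matrix.one_apply, ← hγdef, ← hadef, ← hbdef, mul_ite]
  have hsymm : (Dv θ c p).IsSymm := by
    ext i j
    rw [Matrix.transpose_apply, hentry, hentry]
    rcases eq_or_ne i j with h | h
    · rw [h]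
    · rw [if_neg h, if_neg (Ne.symm h)]; ring
  refine ⟨hsymm, Matrix.posDef_iff_dotProduct_mulVec.mpr ⟨hsymm, ?_⟩, ?_⟩
  · -- positive definiteness
    intro x hx
    have hxs : 0 < x 0 ^ 2 + x 1 ^ 2 + x 2 ^ 2 := by
      rcases lt_or_eq_of_le (by positivity : (0:ℝ) ≤ x 0 ^ 2 + x 1 ^ 2 + x 2 ^ 2) with h | h
      · exact h
      · exfalso
        apply hx
        have hq0 : x 0 ^ 2 = 0 := by
          have := sq_nonneg (x 0); have := sq_nonneg (x 1); have := sq_nonneg (x 2); linarith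
        have hq1 : x 1 ^ 2 = 0 := by
          have := sq_nonneg (x 0); have := sq_nonneg (x 1); have := sq_nonneg (x 2); linarith
        have hq2 : x 2 ^ 2 = 0 := by
          have := sq_nonneg (x 0); have := sq_nonneg (x 1); have := sq_nonneg (x 2); linarith
        have h0 : x 0 = 0 := sq_eq_zero_iff.mp hq0
        have h1 : x 1 = 0 := sq_eq_zero_iff.mp hq1
        have h2 : x 2 = 0 := sq_eq_zero_iff.mp hq2
        funext i
        fin_cases i <;> assumption
    have quad : dotProduct x ((Dv θ c p).mulVec x) =
        a * (x 0 ^ 2 + x 1 ^ 2 + x 2 ^ 2)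
          - b * ((p 0 * x 0 + p 1 * x 1 + p 2 * x 2) ^ 2 / c ^ 2) := by
      simp only [dotProduct, Matrix.mulVec, Fin.sum_univ_three, hentry]
      norm_num [Fin.ext_iff]
      ring
    rw [show star x = x from rfl, quad]
    have hC := cauchy3 (p 0) (p 1) (p 2) (x 0) (x 1) (x 2)
    have key : b * ((p 0 * x 0 + p 1 * x 1 + p 2 * x 2) ^ 2 / c ^ 2)
        ≤ b * s * (x 0 ^ 2 + x 1 ^ 2 + x 2 ^ 2) := by
      have e1 : b * ((p 0 * x 0 + p 1 * x 1 + p 2 * x 2) ^ 2 / c ^ 2)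
          = b / c ^ 2 * (p 0 * x 0 + p 1 * x 1 + p 2 * x 2) ^ 2 := by ring
      have e2 : b * s * (x 0 ^ 2 + x 1 ^ 2 + x 2 ^ 2)
          = b / c ^ 2 * ((p 0 ^ 2 + p 1 ^ 2 + p 2 ^ 2) * (x 0 ^ 2 + x 1 ^ 2 + x 2 ^ 2)) := by
        rw [hsdef]; ring
      rw [e1, e2]
      exact mul_le_mul_of_nonneg_left hC (by positivity)
    nlinarith [mul_pos hm0 hxs, key, hxs]
  · -- determinant
    have hdet : (Dv θ c p).det = a * a * (a - b * s) := by
      rw [Matrix.det_fin_three]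
      simp only [hentry]
      rw [hsdef]
      norm_num [Fin.ext_iff]
      ring
    rw [hdet]
    have h5 : (γ:ℝ) ^ (-5 : ℤ) = 1 / γ * (1 / γ) * (1 / γ ^ 3) := by
      have h6 : (γ:ℝ) ^ (-5 : ℤ) = (γ ^ 5)⁻¹ := by rw [zpow_neg]; norm_cast
      rw [h6]
      field_simp
    rw [h5]
    have h1 : 0 < 1 / γ := by positivity
    exact mul_le_mul (mul_le_mul ha ha (le_of_lt h1) (le_of_lt ha0)) hm1 (by positivity)
      (by positivity)
end
end

section
/- For c ≥ 1, 0 ≤ θ ≤ 1, and p ∈ ℝ³, the vector w_θ(p) = [∇v_c^θ(p)]^{−1}(p − v_c(p)) equals ((1 − 1/γ_c(p))/(θ/γ_c(p)³ + 1 − θ))·p, and satisfies |w_θ(p)| ≤ γ_c(p)|p|³/c². -/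
noncomputable section

/-- The relativistic velocity `v_c(p) = p / γ_c(p)`. -/
def vel (c : ℝ) (p : EuclideanSpace ℝ (Fin 3)) : EuclideanSpace ℝ (Fin 3) :=
  (gam c p)⁻¹ • p

/-- The vector `w_θ(p) = [∇v_c^θ(p)]⁻¹ (p − v_c(p))`, regarded as an element of
Euclidean space. -/
def wvec (θ c : ℝ) (p : EuclideanSpace ℝ (Fin 3)) : EuclideanSpace ℝ (Fin 3) :=
  (WithLp.equiv 2 (Fin 3 → ℝ)).symm
    ((Dv θ c p)⁻¹.mulVec (WithLp.equiv 2 (Fin 3 → ℝ) (p - vel c p)))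

theorem stmt8 (θ c : ℝ) (hθ0 : 0 ≤ θ) (hθ1 : θ ≤ 1) (hc : 1 ≤ c)
    (p : EuclideanSpace ℝ (Fin 3)) :
    wvec θ c p = ((1 - 1 / gam c p) / (θ / (gam c p) ^ 3 + 1 - θ)) • p ∧
      ‖wvec θ c p‖ ≤ gam c p * ‖p‖ ^ 3 / c ^ 2 := by
  have hc0 : (0:ℝ) < c := lt_of_lt_of_le one_pos hc
  set γ := gam c p with hγdef
  have hγ2 : γ ^ 2 = 1 + ‖p‖ ^ 2 / c ^ 2 := Real.sq_sqrt (by positivity)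
  have hγnn : 0 ≤ γ := Real.sqrt_nonneg _
  have hγ1 : 1 ≤ γ := by
    nlinarith [div_nonneg (sq_nonneg ‖p‖) (sq_nonneg c)]
  have hγ0 : (0:ℝ) < γ := lt_of_lt_of_le one_pos hγ1
  have hS : ‖p‖ ^ 2 = p 0 ^ 2 + p 1 ^ 2 + p 2 ^ 2 := by
    rw [EuclideanSpace.norm_eq, Real.sq_sqrt (Finset.sum_nonneg fun i _ => sq_nonneg _)]
    simp [Fin.sum_univ_three, Real.norm_eq_abs, sq_abs]
  have hSc : p 0 ^ 2 + p 1 ^ 2 + p 2 ^ 2 = (γ ^ 2 - 1) * c ^ 2 := by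
    rw [← hS, hγ2]; field_simp; ring
  set a := θ / γ ^ 3 + 1 - θ with hadef
  have haγ : 1 ≤ a * γ ^ 3 := by
    have h3 : 1 ≤ γ ^ 3 := by nlinarith
    have : a * γ ^ 3 = θ + (1 - θ) * γ ^ 3 := by
      rw [hadef, sub_mul, add_mul, div_mul_cancel₀ _ (pow_pos hγ0 3).ne']; ring
    rw [this]; nlinarith
  have ha : 0 < a := by nlinarith [pow_pos hγ0 3]
  clear_value γ a
  have hβ : θ / γ ^ 3 * ((p 0 ^ 2 + p 1 ^ 2 + p 2 ^ 2) / c ^ 2) = θ / γ - θ / γ ^ 3 := by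
    rw [hSc]
    field_simp
  have key : ∀ t : ℝ, (Dv θ c p).mulVec (fun i => t * p i)
      = fun i => (a * t) * p i := by
    intro t
    funext i
    simp only [Dv, Matrix.mulVec, dotProduct, Fin.sum_univ_three,
      Matrix.sub_apply, Matrix.smul_apply, Matrix.one_apply, Matrix.of_apply,
      smul_eq_mul, ← hγdef]
    fin_cases i <;>
      simp only [Fin.isValue, if_true, if_false, Fin.zero_eta, Fin.mk_one,
        show ((0:Fin 3) = 1) = False by simp, show ((0:Fin 3) = 2) = False by simp,
        show ((1:Fin 3) = 0) = False by simp, show ((1:Fin 3) = 2) = False by simp,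
        show ((2:Fin 3) = 0) = False by simp, show ((2:Fin 3) = 1) = False by simp]
    · rw [hadef]; linear_combination (-(t * p 0)) * hβ
    · rw [hadef]; linear_combination (-(t * p 1)) * hβ
    · simp only [Fin.reduceFinMk, Fin.reduceEq, if_true, if_false, Fin.isValue,
        show ((2:Fin 3) = 0) = False by simp, show ((2:Fin 3) = 1) = False by simp]
      rw [hadef]; linear_combination (-(t * p 2)) * hβ
  -- determinant
  have hdet : (Dv θ c p).det = (θ / γ + 1 - θ) ^ 2 * a := by
    simp only [Dv, Matrix.det_fin_three, Matrix.sub_apply, Matrix.smul_apply,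
      Matrix.one_apply, Matrix.of_apply, smul_eq_mul, ← hγdef,
      show ((0:Fin 3) = 1) = False by simp, show ((0:Fin 3) = 2) = False by simp,
      show ((1:Fin 3) = 0) = False by simp, show ((1:Fin 3) = 2) = False by simp,
      show ((2:Fin 3) = 0) = False by simp, show ((2:Fin 3) = 1) = False by simp,
      if_true, if_false, eq_self_iff_true]
    rw [hadef]
    linear_combination (-((θ / γ + (1 - θ)) ^ 2)) * hβ
  have hα : 0 < θ / γ + 1 - θ := by
    have h1 : 1 ≤ (θ / γ + 1 - θ) * γ := by
      have : (θ / γ + 1 - θ) * γ = θ + (1 - θ) * γ := by field_simp; ring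
      rw [this]; nlinarith
    nlinarith
  have hdet0 : IsUnit (Dv θ c p).det := by
    rw [hdet]
    exact (isUnit_iff_ne_zero).2 (by positivity)
  have hinv : (Dv θ c p)⁻¹ * Dv θ c p = 1 := Matrix.nonsing_inv_mul _ hdet0
  -- the main formula
  have h1 : wvec θ c p = ((1 - 1 / γ) / a) • p := by
    have hsub : (WithLp.equiv 2 (Fin 3 → ℝ)) (p - vel c p)
        = fun i => (1 - 1 / γ) * p i := by
      funext i
      simp only [WithLp.equiv, Equiv.refl_apply, vel, ← hγdef]
      show p i - γ⁻¹ * p i = (1 - 1 / γ) * p i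
      ring
    have hx : (fun i => (1 - 1 / γ) * p i)
        = (Dv θ c p).mulVec (fun i => ((1 - 1 / γ) / a) * p i) := by
      rw [key]
      funext i
      rw [mul_div_cancel₀ _ (ne_of_gt ha)]
    ext i
    show (Dv θ c p)⁻¹.mulVec ((WithLp.equiv 2 (Fin 3 → ℝ)) (p - vel c p)) i
        = ((1 - 1 / γ) / a) * p i
    rw [hsub, hx, Matrix.mulVec_mulVec, hinv, Matrix.one_mulVec]
  refine ⟨h1, ?_⟩
  rw [h1, norm_smul, Real.norm_eq_abs]
  have hs0 : 0 ≤ (1 - 1 / γ) / a := by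
    apply div_nonneg _ ha.le
    have : 1 / γ ≤ 1 := by rw [div_le_one hγ0]; exact hγ1
    linarith
  rw [abs_of_nonneg hs0]
  have hsle : (1 - 1 / γ) / a ≤ (γ - 1) * γ ^ 2 := by
    rw [div_le_iff₀ ha, show (1:ℝ) - 1 / γ = (γ - 1) / γ by field_simp, div_le_iff₀ hγ0]
    have h3 : (γ - 1) * γ ^ 2 * a * γ = (γ - 1) * (a * γ ^ 3) := by ring
    rw [h3]
    calc γ - 1 = (γ - 1) * 1 := by ring
      _ ≤ (γ - 1) * (a * γ ^ 3) :=
        mul_le_mul_of_nonneg_left haγ (by linarith)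
  have hfin : (γ - 1) * γ ^ 2 * ‖p‖ ≤ γ * ‖p‖ ^ 3 / c ^ 2 := by
    have h2 : γ * ‖p‖ ^ 3 / c ^ 2 = γ * (γ ^ 2 - 1) * ‖p‖ := by
      rw [hγ2]
      field_simp
      ring
    rw [h2]
    have h4 : γ * (γ ^ 2 - 1) * ‖p‖ - (γ - 1) * γ ^ 2 * ‖p‖ = (γ - 1) * γ * ‖p‖ := by
      ring
    have h5 : 0 ≤ (γ - 1) * γ * ‖p‖ :=
      mul_nonneg (mul_nonneg (by linarith) hγ0.le) (norm_nonneg p)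
    linarith
  calc (1 - 1 / γ) / a * ‖p‖ ≤ (γ - 1) * γ ^ 2 * ‖p‖ :=
        mul_le_mul_of_nonneg_right hsle (norm_nonneg p)
    _ ≤ γ * ‖p‖ ^ 3 / c ^ 2 := hfin
end
end

section
/- Let E : [0,∞) × ℝ³ → ℝ³ satisfy sup_{t≥0} (1+t)^{α+1}‖E(t,·)‖_{L^∞} ≤ η₀ with α > 1. Then the finite-time wave operator W_c(t)(x,p) = (X_c(t) − t v_c(P_c(t)), P_c(t)) converges uniformly in (x,p) as t → ∞, with |W_c(t)(x,p) − W_c^+(x,p)| ≤ C η₀ (1+t)^{−(α−1)} for a constant C independent of c, t, x, p. -/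
noncomputable section
open RealInnerProductSpace Topology

lemma vel_fderiv (c : ℝ) (hc : 1 ≤ c) (p : EuclideanSpace ℝ (Fin 3)) :
    ∃ D : EuclideanSpace ℝ (Fin 3) →L[ℝ] EuclideanSpace ℝ (Fin 3),
      HasFDerivAt (vel c) D p ∧ ∀ h, ‖D h‖ ≤ ‖h‖ := by
  have hc0 : (0:ℝ) < c := lt_of_lt_of_le one_pos hc
  have hfx : (0:ℝ) < 1 + ‖p‖ ^ 2 / c ^ 2 := by positivity
  set g : ℝ := gam c p with hgdef
  have hg2 : g ^ 2 = 1 + ‖p‖ ^ 2 / c ^ 2 := Real.sq_sqrt hfx.le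
  have hg1 : 1 ≤ g := by
    have h1 := Real.sqrt_le_sqrt (show (1:ℝ) ≤ 1 + ‖p‖ ^ 2 / c ^ 2 by
      have : (0:ℝ) ≤ ‖p‖ ^ 2 / c ^ 2 := by positivity
      linarith)
    simpa [hgdef, gam] using h1
  have hg0 : 0 < g := lt_of_lt_of_le one_pos hg1
  have hnsq : HasFDerivAt (fun q : EuclideanSpace ℝ (Fin 3) => ‖q‖ ^ 2)
      (2 • innerSL ℝ p) p := (hasStrictFDerivAt_norm_sq p).hasFDerivAt
  have hf : HasFDerivAt (fun q : EuclideanSpace ℝ (Fin 3) => 1 + ‖q‖ ^ 2 / c ^ 2)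
      ((c ^ 2)⁻¹ • (2 • innerSL ℝ p)) p := by
    have h2 := (hnsq.const_mul ((c ^ 2)⁻¹)).const_add 1
    have : (fun q : EuclideanSpace ℝ (Fin 3) => 1 + (c ^ 2)⁻¹ * ‖q‖ ^ 2)
        = fun q : EuclideanSpace ℝ (Fin 3) => 1 + ‖q‖ ^ 2 / c ^ 2 := by
      funext q; rw [div_eq_inv_mul]
    rwa [this] at h2
  have hgam : HasFDerivAt (gam c)
      ((1 / (2 * g)) • ((c ^ 2)⁻¹ • (2 • innerSL ℝ p))) p := by
    have := hf.sqrt hfx.ne'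
    exact this
  have hinv : HasFDerivAt (fun q => (gam c q)⁻¹)
      ((-(g ^ 2)⁻¹) • ((1 / (2 * g)) • ((c ^ 2)⁻¹ • (2 • innerSL ℝ p)))) p := by
    exact (hasDerivAt_inv hg0.ne').comp_hasFDerivAt p hgam
  have hvel : HasFDerivAt (vel c)
      (g⁻¹ • ContinuousLinearMap.id ℝ (EuclideanSpace ℝ (Fin 3)) +
        ((-(g ^ 2)⁻¹) • ((1 / (2 * g)) • ((c ^ 2)⁻¹ • (2 • innerSL ℝ p)))).smulRight p) p := by
    exact hinv.smul (hasFDerivAt_id p)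
  refine ⟨_, hvel, ?_⟩
  intro h
  set i : ℝ := ⟪p, h⟫ with hidef
  set a : ℝ := -(i / (c ^ 2 * g ^ 3)) with hadef
  have happ : (g⁻¹ • ContinuousLinearMap.id ℝ (EuclideanSpace ℝ (Fin 3)) +
        ((-(g ^ 2)⁻¹) • ((1 / (2 * g)) • ((c ^ 2)⁻¹ • (2 • innerSL ℝ p)))).smulRight p) h
      = g⁻¹ • h + a • p := by
    simp only [ContinuousLinearMap.add_apply, ContinuousLinearMap.smul_apply,
      ContinuousLinearMap.smulRight_apply, ContinuousLinearMap.id_apply, innerSL_apply_apply,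
      smul_smul]
    congr 1
    rw [hadef, hidef]
    congr 1
    field_simp
    have hg3 : g ^ 3 * g⁻¹ ^ 3 = 1 := by rw [← mul_pow, mul_inv_cancel₀ hg0.ne', one_pow]
    have hc3 : c ^ 2 * c⁻¹ ^ 2 = 1 := by rw [← mul_pow, mul_inv_cancel₀ hc0.ne', one_pow]
    linear_combination (-(⟪p, h⟫) * c ^ 2 * c⁻¹ ^ 2) * hg3 + (-⟪p, h⟫) * hc3
  rw [happ]
  have hip : ⟪h, p⟫ = i := by rw [hidef]; exact real_inner_comm p h
  have hnormsq : ‖g⁻¹ • h + a • p‖ ^ 2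
      = (g⁻¹) ^ 2 * ‖h‖ ^ 2 + 2 * (g⁻¹ * a * i) + a ^ 2 * ‖p‖ ^ 2 := by
    rw [norm_add_sq_real]
    rw [norm_smul, norm_smul, real_inner_smul_left, real_inner_smul_right, hip]
    simp only [Real.norm_eq_abs]
    rw [mul_pow, mul_pow, sq_abs, sq_abs]
    ring
  have hp2 : ‖p‖ ^ 2 = c ^ 2 * (g ^ 2 - 1) := by
    have := hg2
    field_simp at this ⊢
    linarith
  have hkey : ‖g⁻¹ • h + a • p‖ ^ 2 ≤ ‖h‖ ^ 2 := by
    rw [hnormsq, hp2, hadef]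
    have hg0' : g ≠ 0 := hg0.ne'
    have hc0' : c ≠ 0 := hc0.ne'
    have heq : (g⁻¹) ^ 2 * ‖h‖ ^ 2 + 2 * (g⁻¹ * -(i / (c ^ 2 * g ^ 3)) * i)
        + (-(i / (c ^ 2 * g ^ 3))) ^ 2 * (c ^ 2 * (g ^ 2 - 1))
        = ‖h‖ ^ 2 / g ^ 2 - (i ^ 2 * (g ^ 2 + 1)) / (c ^ 2 * g ^ 6) := by
      field_simp
      ring
    rw [heq]
    have h1 : ‖h‖ ^ 2 / g ^ 2 ≤ ‖h‖ ^ 2 :=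
      div_le_self (by positivity) (one_le_pow₀ hg1)
    have h2 : (0:ℝ) ≤ (i ^ 2 * (g ^ 2 + 1)) / (c ^ 2 * g ^ 6) := by positivity
    linarith
  nlinarith [norm_nonneg (g⁻¹ • h + a • p), norm_nonneg h, hkey]

lemma decay_bound {E : Type*} [NormedAddCommGroup E] [NormedSpace ℝ E]
    (f : ℝ → E) (f' : ℝ → E) (η β : ℝ) (hβ : 0 < β) (hη : 0 ≤ η)
    (hderiv : ∀ τ ≥ (0:ℝ), HasDerivAt f (f' τ) τ)
    (hbound : ∀ τ ≥ (0:ℝ), ‖f' τ‖ ≤ η * (1 + τ) ^ (-(β + 1))) :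
    ∀ s ≥ (0:ℝ), ∀ t ≥ s, ‖f t - f s‖ ≤ (η / β) * (1 + s) ^ (-β) := by
  intro s hs t hts
  set B : ℝ → ℝ := fun τ => (η / β) * ((1 + s) ^ (-β) - (1 + τ) ^ (-β)) with hBdef
  have hBderiv : ∀ x, s ≤ x → HasDerivAt B (η * (1 + x) ^ (-(β + 1))) x := by
    intro x hx
    have h1x : (0:ℝ) < 1 + x := by linarith
    have hr : HasDerivAt (fun τ : ℝ => (1 + τ) ^ (-β)) (-β * (1 + x) ^ (-β - 1) * 1) x :=
      (Real.hasDerivAt_rpow_const (p := -β) (Or.inl h1x.ne')).comp x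
        ((hasDerivAt_id x).const_add 1)
    have h2 : HasDerivAt B ((η / β) * (0 - (-β * (1 + x) ^ (-β - 1) * 1))) x :=
      ((hasDerivAt_const x ((1 + s) ^ (-β))).sub hr).const_mul (η / β)
    convert h2 using 1
    rw [show -β - 1 = -(β + 1) by ring]
    field_simp
    ring
  have hBcont : ContinuousOn B (Set.Icc s t) := fun x hx =>
    (hBderiv x hx.1).continuousAt.continuousWithinAt
  have hfcont : ContinuousOn (fun τ => f τ - f s) (Set.Icc s t) := fun x hx =>
    (((hderiv x (hs.trans hx.1)).sub_const (f s)).continuousAt).continuousWithinAt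
  have key := image_norm_le_of_norm_deriv_right_le_deriv_boundary' (f := fun τ => f τ - f s)
    (f' := f') (a := s) (b := t) hfcont
    (fun x hx => ((hderiv x (hs.trans hx.1)).sub_const (f s)).hasDerivWithinAt)
    (by simp [hBdef]) hBcont
    (fun x hx => (hBderiv x hx.1).hasDerivWithinAt)
    (fun x hx => hbound x (hs.trans hx.1))
  have ht' := key (Set.right_mem_Icc.mpr hts)
  have hpos : (0:ℝ) ≤ (1 + t) ^ (-β) := Real.rpow_nonneg (by linarith) _
  have hc : B t ≤ (η / β) * (1 + s) ^ (-β) := by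
    rw [hBdef]
    have : (0:ℝ) ≤ η / β := div_nonneg hη hβ.le
    nlinarith
  exact ht'.trans hc

/-- The finite-time wave operator `W_c(t)(x,p) = (X_c(t) − t v_c(P_c(t)), P_c(t))`
converges as `t → ∞`, uniformly in `(x,p)`, at the rate `C η₀ (1+t)^{-(α-1)}`,
with `C` independent of `c`, `t`, `x`, `p`. -/
theorem stmt13 (α η₀ : ℝ) (hα : 1 < α) (hη : 0 ≤ η₀) :
    ∃ C > 0, ∀ (c : ℝ), 1 ≤ c →
      ∀ (E : ℝ → EuclideanSpace ℝ (Fin 3) → EuclideanSpace ℝ (Fin 3)),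
      (∀ t ≥ (0 : ℝ), ∀ y, ‖E t y‖ ≤ η₀ / (1 + t) ^ (α + 1)) →
      ∀ (X P : EuclideanSpace ℝ (Fin 3) → EuclideanSpace ℝ (Fin 3) → ℝ →
          EuclideanSpace ℝ (Fin 3)),
      (∀ x p, ∀ s ≥ (0 : ℝ), HasDerivAt (X x p) (vel c (P x p s)) s) →
      (∀ x p, ∀ s ≥ (0 : ℝ), HasDerivAt (P x p) (E s (X x p s)) s) →
      (∀ x p, X x p 0 = x ∧ P x p 0 = p) →
      ∃ Wplus : EuclideanSpace ℝ (Fin 3) → EuclideanSpace ℝ (Fin 3) →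
          EuclideanSpace ℝ (Fin 3) × EuclideanSpace ℝ (Fin 3),
        ∀ x p, ∀ t ≥ (0 : ℝ),
          ‖(X x p t - t • vel c (P x p t), P x p t) - Wplus x p‖ ≤
            C * η₀ * (1 + t) ^ (-(α - 1)) := by
  have hα1 : (0:ℝ) < α - 1 := by linarith
  refine ⟨1 / (α - 1) + 1, by positivity, ?_⟩
  set C : ℝ := 1 / (α - 1) + 1 with hCdef
  have hC1 : (1:ℝ) ≤ C := by
    have : (0:ℝ) ≤ 1 / (α - 1) := by positivity
    rw [hCdef]; linarith
  have hC0 : (0:ℝ) < C := by linarith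
  intro c hc E hE X P hX hP hinit
  choose Dv hDvd hDvb using fun q => vel_fderiv c hc q
  -- main estimate, for each x p
  have main : ∀ x p, ∃ L : EuclideanSpace ℝ (Fin 3) × EuclideanSpace ℝ (Fin 3),
      ∀ t ≥ (0:ℝ), ‖(X x p t - t • vel c (P x p t), P x p t) - L‖ ≤
        C * η₀ * (1 + t) ^ (-(α - 1)) := by
    intro x p
    set Q : ℝ → EuclideanSpace ℝ (Fin 3) := fun t => X x p t - t • vel c (P x p t) with hQdef
    set W : ℝ → EuclideanSpace ℝ (Fin 3) × EuclideanSpace ℝ (Fin 3) :=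
      fun t => (Q t, P x p t) with hWdef
    -- derivative of Q
    have hQderiv : ∀ τ ≥ (0:ℝ),
        HasDerivAt Q (-(τ • Dv (P x p τ) (E τ (X x p τ)))) τ := by
      intro τ hτ
      have h1 : HasDerivAt (fun u => vel c (P x p u))
          (Dv (P x p τ) (E τ (X x p τ))) τ :=
        (hDvd (P x p τ)).comp_hasDerivAt τ (hP x p τ hτ)
      have h2 : HasDerivAt (fun u : ℝ => u • vel c (P x p u))
          (τ • Dv (P x p τ) (E τ (X x p τ)) + (1:ℝ) • vel c (P x p τ)) τ :=
        (hasDerivAt_id τ).smul h1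
      have h3 := (hX x p τ hτ).sub h2
      refine h3.congr_deriv ?_
      rw [one_smul]
      abel
    -- norm bound for Q'
    have hQbound : ∀ τ ≥ (0:ℝ), ‖-(τ • Dv (P x p τ) (E τ (X x p τ)))‖ ≤
        η₀ * (1 + τ) ^ (-((α - 1) + 1)) := by
      intro τ hτ
      have h1τ : (0:ℝ) < 1 + τ := by linarith
      have hA : (0:ℝ) < (1 + τ) ^ (α + 1) := Real.rpow_pos_of_pos h1τ _
      have hb : ‖Dv (P x p τ) (E τ (X x p τ))‖ ≤ η₀ / (1 + τ) ^ (α + 1) :=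
        (hDvb (P x p τ) _).trans (hE τ hτ _)
      have : ‖-(τ • Dv (P x p τ) (E τ (X x p τ)))‖
          = τ * ‖Dv (P x p τ) (E τ (X x p τ))‖ := by
        rw [norm_neg, norm_smul, Real.norm_eq_abs, abs_of_nonneg hτ]
      rw [this]
      have step1 : τ * ‖Dv (P x p τ) (E τ (X x p τ))‖ ≤ τ * (η₀ / (1 + τ) ^ (α + 1)) :=
        mul_le_mul_of_nonneg_left hb hτ
      have step2 : τ * (η₀ / (1 + τ) ^ (α + 1)) ≤ (1 + τ) * (η₀ / (1 + τ) ^ (α + 1)) :=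
        mul_le_mul_of_nonneg_right (by linarith) (by positivity)
      have step3 : (1 + τ) * (η₀ / (1 + τ) ^ (α + 1)) = η₀ * (1 + τ) ^ (-((α - 1) + 1)) := by
        rw [show -((α - 1) + 1) = 1 - (α + 1) by ring, Real.rpow_sub h1τ, Real.rpow_one]
        field_simp
      linarith
    -- norm bound for P'
    have hPbound : ∀ τ ≥ (0:ℝ), ‖E τ (X x p τ)‖ ≤ η₀ * (1 + τ) ^ (-(α + 1)) := by
      intro τ hτ
      have h1τ : (0:ℝ) < 1 + τ := by linarith
      have := hE τ hτ (X x p τ)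
      rwa [div_eq_mul_inv, ← Real.rpow_neg h1τ.le] at this
    have hQest := decay_bound Q _ η₀ (α - 1) hα1 hη hQderiv hQbound
    have hPest := decay_bound (P x p) _ η₀ α (by linarith) hη (hP x p)
      (by intro τ hτ; exact hPbound τ hτ)
    -- combined estimate
    have hW : ∀ s ≥ (0:ℝ), ∀ t ≥ s, ‖W t - W s‖ ≤ C * η₀ * (1 + s) ^ (-(α - 1)) := by
      intro s hs t hts
      have h1s : (1:ℝ) ≤ 1 + s := by linarith
      have hrne : (0:ℝ) ≤ (1 + s) ^ (-(α - 1)) := Real.rpow_nonneg (by linarith) _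
      have hQ' : ‖Q t - Q s‖ ≤ C * η₀ * (1 + s) ^ (-(α - 1)) := by
        have := hQest s hs t hts
        have hcoef : η₀ / (α - 1) ≤ C * η₀ := by
          rw [hCdef, div_eq_mul_one_div]
          nlinarith [mul_le_mul_of_nonneg_left (le_refl (1 / (α - 1))) hη]
        calc ‖Q t - Q s‖ ≤ (η₀ / (α - 1)) * (1 + s) ^ (-(α - 1)) := this
          _ ≤ (C * η₀) * (1 + s) ^ (-(α - 1)) := mul_le_mul_of_nonneg_right hcoef hrne
      have hP' : ‖P x p t - P x p s‖ ≤ C * η₀ * (1 + s) ^ (-(α - 1)) := by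
        have h1 := hPest s hs t hts
        have h2 : (1 + s) ^ (-α) ≤ (1 + s) ^ (-(α - 1)) :=
          Real.rpow_le_rpow_of_exponent_le h1s (by linarith)
        have h3 : η₀ / α ≤ C * η₀ := by
          have e1 : η₀ / α ≤ η₀ := div_le_self hη (by linarith)
          have e2 : η₀ ≤ C * η₀ := le_mul_of_one_le_left hη hC1
          exact e1.trans e2
        calc ‖P x p t - P x p s‖ ≤ (η₀ / α) * (1 + s) ^ (-α) := h1
          _ ≤ (η₀ / α) * (1 + s) ^ (-(α - 1)) :=
              mul_le_mul_of_nonneg_left h2 (by positivity)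
          _ ≤ (C * η₀) * (1 + s) ^ (-(α - 1)) := mul_le_mul_of_nonneg_right h3 hrne
      have : W t - W s = (Q t - Q s, P x p t - P x p s) := rfl
      rw [this, Prod.norm_def]
      exact max_le hQ' hP'
    -- Cauchy sequence
    have hcauchy : CauchySeq (fun n : ℕ => W n) := by
      apply cauchySeq_of_le_tendsto_0' (fun n : ℕ => C * η₀ * (1 + (n:ℝ)) ^ (-(α - 1)))
      · intro n m hnm
        rw [dist_eq_norm, norm_sub_rev]
        exact hW n (Nat.cast_nonneg n) m (by exact_mod_cast hnm)
      · have h1 : Filter.Tendsto (fun n : ℕ => 1 + (n:ℝ)) Filter.atTop Filter.atTop :=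
          Filter.tendsto_atTop_add_const_left _ 1 tendsto_natCast_atTop_atTop
        have h2 := (tendsto_rpow_neg_atTop hα1).comp h1
        have h3 := h2.const_mul (C * η₀)
        simpa using h3
    obtain ⟨L, hL⟩ := cauchySeq_tendsto_of_complete hcauchy
    refine ⟨L, ?_⟩
    intro t ht
    have htend : Filter.Tendsto (fun n : ℕ => ‖W t - W n‖) Filter.atTop (𝓝 ‖W t - L‖) :=
      (Filter.Tendsto.sub tendsto_const_nhds hL).norm
    have hev : ∀ᶠ n : ℕ in Filter.atTop, ‖W t - W n‖ ≤ C * η₀ * (1 + t) ^ (-(α - 1)) := by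
      filter_upwards [Filter.eventually_ge_atTop ⌈t⌉₊] with n hn
      have htn : t ≤ (n:ℝ) := (Nat.le_ceil t).trans (by exact_mod_cast hn)
      rw [norm_sub_rev]
      exact hW t ht n htn
    exact le_of_tendsto htend hev
  choose Wplus hWplus using main
  exact ⟨Wplus, hWplus⟩
end
end

section
/- Fix c ≥ 1, t > 0, x ∈ ℝ³, and for 0 ≤ θ ≤ 1 consider the map p ↦ x − t·v_c^θ(p) from ℝ³ to ℝ³, where v_c^θ(p) = θ·p/γ_c(p) + (1−θ)·p. This map is injective, and the absolute value of the Jacobian determinant of its inverse is bounded by γ_c(p)⁵/t³ at the corresponding point. -/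
noncomputable section

/-- The interpolated velocity `v_c^θ(p) = θ p/γ_c(p) + (1−θ) p`. -/
def velθ (θ c : ℝ) (p : EuclideanSpace ℝ (Fin 3)) : EuclideanSpace ℝ (Fin 3) :=
  (θ / gam c p + (1 - θ)) • p

lemma one_le_gam (c : ℝ) (hc : 1 ≤ c) (p : EuclideanSpace ℝ (Fin 3)) : 1 ≤ gam c p := by
  have h2 : (0:ℝ) ≤ ‖p‖^2 / c^2 := by positivity
  have : (1:ℝ) ≤ 1 + ‖p‖^2 / c^2 := by linarith
  exact Real.one_le_sqrt.mpr this

lemma gam_sq (c : ℝ) (hc : 1 ≤ c) (p : EuclideanSpace ℝ (Fin 3)) :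
    (gam c p)^2 = 1 + ‖p‖^2 / c^2 := by
  have h : (0:ℝ) ≤ 1 + ‖p‖^2 / c^2 := by positivity
  exact Real.sq_sqrt h

lemma norm_sq_eq (p : EuclideanSpace ℝ (Fin 3)) :
    ‖p‖^2 = p 0^2 + p 1^2 + p 2^2 := by
  rw [EuclideanSpace.norm_eq, Real.sq_sqrt (by positivity)]
  simp [Fin.sum_univ_three, sq_abs]

lemma det_Dv (θ c : ℝ) (hc : 1 ≤ c) (p : EuclideanSpace ℝ (Fin 3)) :
    (Dv θ c p).det = (θ / gam c p + (1 - θ))^2 * (θ / (gam c p)^3 + (1 - θ)) := by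
  have hg : 1 ≤ gam c p := one_le_gam c hc p
  have hg0 : gam c p ≠ 0 := by linarith
  have hc0 : c ≠ 0 := by linarith
  set u := (gam c p)⁻¹ with hu
  have hS : (p 0^2 + p 1^2 + p 2^2) * u^2 / c^2 = 1 - u^2 := by
    have h1 := gam_sq c hc p
    rw [norm_sq_eq] at h1
    have h2 : (gam c p)^2 * u^2 = 1 := by rw [hu, ← mul_pow, mul_inv_cancel₀ hg0]; norm_num
    have := congrArg (· * u^2) h1
    simp only at this
    rw [h2] at this
    field_simp at this ⊢
    linarith
  simp only [Dv, Matrix.det_fin_three, Matrix.sub_apply, Matrix.smul_apply, Matrix.one_apply,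
    Matrix.of_apply, smul_eq_mul]
  norm_num [Fin.ext_iff]
  simp only [div_eq_mul_inv, ← inv_pow, ← hu]
  linear_combination (-(θ*u + (1-θ))^2 * θ * u) * hS

lemma Hmono (θ c : ℝ) (hθ0 : 0 ≤ θ) (hθ1 : θ ≤ 1) (hc : 1 ≤ c) {r s : ℝ}
    (hr : 0 ≤ r) (hrs : r < s) :
    (θ / Real.sqrt (1 + r^2/c^2) + (1-θ)) * r <
      (θ / Real.sqrt (1 + s^2/c^2) + (1-θ)) * s := by
  have hc0 : (0:ℝ) < c^2 := by positivity
  set gr := Real.sqrt (1 + r^2/c^2) with hgr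
  set gs := Real.sqrt (1 + s^2/c^2) with hgs
  have hr2 : (0:ℝ) ≤ r^2/c^2 := by positivity
  have hs2 : (0:ℝ) ≤ s^2/c^2 := by positivity
  have hgr1 : 1 ≤ gr := Real.one_le_sqrt.mpr (by linarith)
  have hgs1 : 1 ≤ gs := Real.one_le_sqrt.mpr (by linarith)
  have hgr2 : gr^2 = 1 + r^2/c^2 := Real.sq_sqrt (by positivity)
  have hgs2 : gs^2 = 1 + s^2/c^2 := Real.sq_sqrt (by positivity)
  have hrsq : r^2 < s^2 := by nlinarith
  have key : r * gs < s * gr := by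
    have h2 : (r*gs)^2 < (s*gr)^2 := by
      rw [mul_pow, mul_pow, hgr2, hgs2]
      have e1 : r^2 * (s^2/c^2) = s^2 * (r^2/c^2) := by ring
      nlinarith [e1]
    exact lt_of_pow_lt_pow_left₀ 2 (by nlinarith) h2
  have hdiv : r / gr < s / gs := by
    rw [div_lt_div_iff₀ (by linarith) (by linarith)]
    linarith
  have e1 : (θ/gr + (1-θ))*r = θ*(r/gr)+(1-θ)*r := by ring
  have e2 : (θ/gs + (1-θ))*s = θ*(s/gs)+(1-θ)*s := by ring
  rw [e1, e2]
  rcases lt_or_ge θ 1 with h | h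
  · have h1 : θ*(r/gr) ≤ θ*(s/gs) := mul_le_mul_of_nonneg_left hdiv.le hθ0
    have h2 : (1-θ)*r < (1-θ)*s := mul_lt_mul_of_pos_left hrs (by linarith)
    linarith
  · have hθ : θ = 1 := le_antisymm hθ1 h
    have h1 : θ*(r/gr) < θ*(s/gs) := mul_lt_mul_of_pos_left hdiv (by linarith)
    have h2 : (1-θ)*r ≤ (1-θ)*s := by rw [hθ]; norm_num
    linarith

lemma coef_ge (θ c : ℝ) (hθ0 : 0 ≤ θ) (hθ1 : θ ≤ 1) {g : ℝ} (hg : 1 ≤ g) :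
    1/g ≤ θ/g + (1-θ) := by
  have hg0 : (0:ℝ) < g := by linarith
  have h1 : (1-θ)/g ≤ 1-θ := div_le_self (by linarith) hg
  have h2 : θ/g + (1-θ)/g = 1/g := by field_simp; ring
  linarith


/-- For `t > 0`, the map `p ↦ x − t v_c^θ(p)` is injective and the absolute value of
the Jacobian determinant of its inverse (namely `1/|det(−t ∇v_c^θ(p))|`) is bounded by
`γ_c(p)⁵ / t³`. -/
theorem stmt15 (θ c t : ℝ) (hθ0 : 0 ≤ θ) (hθ1 : θ ≤ 1) (hc : 1 ≤ c) (ht : 0 < t)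
    (x : EuclideanSpace ℝ (Fin 3)) :
    Function.Injective (fun p : EuclideanSpace ℝ (Fin 3) => x - t • velθ θ c p) ∧
      ∀ p : EuclideanSpace ℝ (Fin 3),
        |((-t : ℝ) ^ 3 * (Dv θ c p).det)|⁻¹ ≤ (gam c p) ^ 5 / t ^ 3 := by
  have hcoefpos : ∀ p : EuclideanSpace ℝ (Fin 3), 0 < θ / gam c p + (1 - θ) := by
    intro p
    have hg := one_le_gam c hc p
    have h1 := coef_ge θ c hθ0 hθ1 hg
    have : (0:ℝ) < 1 / gam c p := by positivity
    linarith
  constructor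
  · intro p q hpq
    simp only at hpq
    have hv : velθ θ c p = velθ θ c q := by
      have h1 : t • velθ θ c p = t • velθ θ c q := by
        have := sub_right_injective hpq
        exact this
      exact smul_right_injective _ (ne_of_gt ht) h1
    have ha := hcoefpos p
    have hb := hcoefpos q
    have hnorm : (θ / gam c p + (1 - θ)) * ‖p‖ = (θ / gam c q + (1 - θ)) * ‖q‖ := by
      have := congrArg norm hv
      simpa [velθ, norm_smul, abs_of_pos ha, abs_of_pos hb] using this
    have hgp : gam c p = Real.sqrt (1 + ‖p‖^2/c^2) := rfl
    have hgq : gam c q = Real.sqrt (1 + ‖q‖^2/c^2) := rfl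
    have hnn : ‖p‖ = ‖q‖ := by
      rcases lt_trichotomy ‖p‖ ‖q‖ with h | h | h
      · exfalso
        have := Hmono θ c hθ0 hθ1 hc (norm_nonneg p) h
        rw [← hgp, ← hgq] at this
        linarith
      · exact h
      · exfalso
        have := Hmono θ c hθ0 hθ1 hc (norm_nonneg q) h
        rw [← hgp, ← hgq] at this
        linarith
    have hgam : gam c p = gam c q := by rw [hgp, hgq, hnn]
    have hv' : (θ / gam c p + (1 - θ)) • p = (θ / gam c p + (1 - θ)) • q := by
      have : velθ θ c p = velθ θ c q := hv
      simpa [velθ, ← hgam] using this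
    exact smul_right_injective _ (ne_of_gt ha) hv'
  · intro p
    have hg := one_le_gam c hc p
    have hg0 : (0:ℝ) < gam c p := by linarith
    have hg3 : 1 ≤ (gam c p)^3 := one_le_pow₀ hg
    have ha : 1/gam c p ≤ θ / gam c p + (1 - θ) := coef_ge θ c hθ0 hθ1 hg
    have had : 1/(gam c p)^3 ≤ θ / (gam c p)^3 + (1 - θ) := coef_ge θ c hθ0 hθ1 hg3
    have hap : 0 < θ / gam c p + (1 - θ) := hcoefpos p
    have hdp : 0 < θ / (gam c p)^3 + (1 - θ) := by
      have : (0:ℝ) < 1/(gam c p)^3 := by positivity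
      linarith
    have hdet : (Dv θ c p).det = (θ / gam c p + (1 - θ))^2 * (θ / (gam c p)^3 + (1 - θ)) :=
      det_Dv θ c hc p
    have hdetpos : 0 < (Dv θ c p).det := by rw [hdet]; positivity
    have hdetge : 1/(gam c p)^5 ≤ (Dv θ c p).det := by
      rw [hdet]
      have h1 : (1/gam c p)^2 ≤ (θ / gam c p + (1 - θ))^2 := by
        apply pow_le_pow_left₀ (by positivity) ha
      calc 1/(gam c p)^5 = (1/gam c p)^2 * (1/(gam c p)^3) := by
            field_simp
        _ ≤ (θ / gam c p + (1 - θ))^2 * (θ / (gam c p)^3 + (1 - θ)) := by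
            apply mul_le_mul h1 had (by positivity) (by positivity)
    have habs : |((-t : ℝ) ^ 3 * (Dv θ c p).det)| = t^3 * (Dv θ c p).det := by
      rw [abs_mul, abs_pow, abs_neg, abs_of_pos ht, abs_of_pos hdetpos]
    rw [habs]
    have key : t^3 / (gam c p)^5 ≤ t^3 * (Dv θ c p).det := by
      have := mul_le_mul_of_nonneg_left hdetge (le_of_lt (by positivity : (0:ℝ) < t^3))
      calc t^3/(gam c p)^5 = t^3 * (1/(gam c p)^5) := by ring
        _ ≤ _ := this
    have h5 : (0:ℝ) < t^3 / (gam c p)^5 := by positivity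
    calc (t^3 * (Dv θ c p).det)⁻¹ ≤ (t^3/(gam c p)^5)⁻¹ := by
          apply inv_anti₀ h5 key
      _ = (gam c p)^5 / t^3 := by rw [inv_div]
end
end

section
/- Let g : ℝ⁶ → [0,∞) be continuously differentiable, and let W, W' : ℝ⁶ → ℝ⁶ be volume-preserving C¹ diffeomorphisms with ‖W(z) − W'(z)‖_∞ ≤ δ for all z and ‖∇(W^θ) − I₆‖ ≤ 1/2 where W^θ = θW + (1−θ)W' for all θ ∈ [0,1]. Then ‖g∘W − g∘W'‖_{L¹(ℝ⁶)} ≤ C δ ‖∇g‖_{L¹(ℝ⁶)} for an absolute constant C. -/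
open MeasureTheory Metric ENNReal
noncomputable section

local notation "E6" => EuclideanSpace ℝ (Fin 6)

lemma norm_lb (A : E6 →L[ℝ] E6) (h : ‖A - ContinuousLinearMap.id ℝ E6‖ ≤ 1/2) :
    ∀ x : E6, (1/2 : ℝ) * ‖x‖ ≤ ‖A x‖ := by
  intro x
  have h1 : ‖A x - x‖ ≤ (1/2) * ‖x‖ := by
    have := (A - ContinuousLinearMap.id ℝ E6).le_of_opNorm_le h x
    simpa using this
  have h2 : ‖x‖ ≤ ‖A x‖ + ‖A x - x‖ := by
    have := norm_sub_le (A x) (A x - x)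
    simpa using this
  linarith

lemma det_lb (A : E6 →L[ℝ] E6) (h : ‖A - ContinuousLinearMap.id ℝ E6‖ ≤ 1/2) :
    (1:ℝ)/64 ≤ |A.det| := by
  have hlow := norm_lb A h
  have hinj : Function.Injective A := by
    intro x y hxy
    have h0 : A (x - y) = 0 := by rw [map_sub, hxy, sub_self]
    have := hlow (x - y)
    rw [h0, norm_zero] at this
    have : ‖x - y‖ ≤ 0 := by linarith
    have := norm_le_zero_iff.mp this
    exact sub_eq_zero.mp this
  have hsurj : Function.Surjective A :=
    LinearMap.injective_iff_surjective.mp hinj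
  have hsub : closedBall (0 : E6) (1/2) ⊆ ⇑A '' closedBall 0 1 := by
    intro y hy
    obtain ⟨x, hx⟩ := hsurj y
    refine ⟨x, ?_, hx⟩
    rw [mem_closedBall_zero_iff] at hy ⊢
    have := hlow x
    rw [hx] at this
    linarith
  have himg : volume (⇑A '' closedBall (0:E6) 1)
      = ENNReal.ofReal |A.det| * volume (closedBall (0:E6) 1) := by
    have : ⇑A = ⇑(A : E6 →ₗ[ℝ] E6) := rfl
    rw [this, Measure.addHaar_image_linearMap]
  have hb1 : volume (closedBall (0:E6) 1)
      = ENNReal.ofReal ((1:ℝ) ^ Module.finrank ℝ E6) * volume (ball (0:E6) 1) :=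
    MeasureTheory.Measure.addHaar_closedBall volume (0:E6) zero_le_one
  have hb2 : volume (closedBall (0:E6) (1/2))
      = ENNReal.ofReal ((1/2:ℝ) ^ Module.finrank ℝ E6) * volume (ball (0:E6) 1) :=
    MeasureTheory.Measure.addHaar_closedBall volume (0:E6) (by norm_num)
  have hmono : volume (closedBall (0:E6) (1/2)) ≤ volume (⇑A '' closedBall (0:E6) 1) :=
    measure_mono hsub
  rw [hb2, himg, hb1] at hmono
  have hfr : Module.finrank ℝ E6 = 6 := by simp
  rw [hfr] at hmono
  simp only [one_pow, ENNReal.ofReal_one, one_mul] at hmono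
  have hvne : volume (ball (0:E6) 1) ≠ 0 :=
    (measure_ball_pos volume 0 one_pos).ne'
  have hvtop : volume (ball (0:E6) 1) ≠ ⊤ := measure_ball_lt_top.ne
  have := (ENNReal.mul_le_mul_iff_left hvne hvtop).mp hmono
  have := (ENNReal.ofReal_le_ofReal_iff (abs_nonneg _)).mp this
  calc (1:ℝ)/64 = (1/2)^6 := by norm_num
    _ ≤ |A.det| := this

lemma cov_le (F : E6 → E6) (hF : ContDiff ℝ 1 F)
    (hb : ∀ z, ‖fderiv ℝ F z - ContinuousLinearMap.id ℝ E6‖ ≤ 1/2)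
    (u : E6 → ℝ≥0∞) (hu : Measurable u) :
    (∫⁻ z, u (F z)) ≤ 64 * ∫⁻ z, u z := by
  have hFd : Differentiable ℝ F := hF.differentiable one_ne_zero
  have hinj : Function.Injective F := by
    set f : E6 → E6 := fun y => F y - y with hf
    have hfd : ∀ x ∈ (Set.univ : Set E6), DifferentiableAt ℝ f x :=
      fun x _ => (hFd x).sub differentiableAt_id
    have hbound : ∀ x ∈ (Set.univ : Set E6), ‖fderiv ℝ f x‖ ≤ 1/2 := by
      intro x _
      have heq : fderiv ℝ f x = fderiv ℝ F x - ContinuousLinearMap.id ℝ E6 := by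
        rw [show f = (fun y => F y - y) from rfl, fderiv_fun_sub (hFd x) differentiableAt_fun_id]
        simp [fderiv_id]
      rw [heq]; exact hb x
    intro x y hxy
    have hmv := Convex.norm_image_sub_le_of_norm_fderiv_le hfd hbound convex_univ
      (Set.mem_univ x) (Set.mem_univ y)
    have heq : f y - f x = x - y := by
      simp only [hf]
      rw [hxy]
      abel
    rw [heq] at hmv
    have h0 : ‖x - y‖ = 0 := by
      have := norm_nonneg (x - y)
      have hyx : ‖y - x‖ = ‖x - y‖ := norm_sub_rev y x
      rw [hyx] at hmv
      linarith
    have := norm_eq_zero.mp h0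
    exact sub_eq_zero.mp this
  have hd : ∀ x ∈ (Set.univ : Set E6), HasFDerivWithinAt F (fderiv ℝ F x) Set.univ x :=
    fun x _ => (hFd x).hasFDerivAt.hasFDerivWithinAt
  have key := lintegral_image_eq_lintegral_abs_det_fderiv_mul volume MeasurableSet.univ hd
    hinj.injOn u
  rw [Measure.restrict_univ] at key
  have hone : ∀ z : E6, (1:ℝ≥0∞) ≤ 64 * ENNReal.ofReal |(fderiv ℝ F z).det| := by
    intro z
    have hdet := det_lb (fderiv ℝ F z) (hb z)
    have h64 : (64:ℝ≥0∞) = ENNReal.ofReal (64:ℝ) := by norm_num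
    calc (1:ℝ≥0∞) = ENNReal.ofReal (64 * (1/64:ℝ)) := by norm_num
      _ = ENNReal.ofReal (64:ℝ) * ENNReal.ofReal (1/64:ℝ) :=
          ENNReal.ofReal_mul (by norm_num)
      _ ≤ ENNReal.ofReal (64:ℝ) * ENNReal.ofReal |(fderiv ℝ F z).det| :=
          mul_le_mul_right (ENNReal.ofReal_le_ofReal hdet) _
      _ = 64 * ENNReal.ofReal |(fderiv ℝ F z).det| := by rw [← h64]
  calc (∫⁻ z, u (F z))
      ≤ ∫⁻ z, 64 * (ENNReal.ofReal |(fderiv ℝ F z).det| * u (F z)) := by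
        apply lintegral_mono
        intro z
        calc u (F z) = 1 * u (F z) := (one_mul _).symm
          _ ≤ (64 * ENNReal.ofReal |(fderiv ℝ F z).det|) * u (F z) :=
              mul_le_mul_left (hone z) _
          _ = 64 * (ENNReal.ofReal |(fderiv ℝ F z).det| * u (F z)) := mul_assoc _ _ _
    _ = 64 * ∫⁻ z, ENNReal.ofReal |(fderiv ℝ F z).det| * u (F z) :=
        lintegral_const_mul' _ _ (by simp)
    _ = 64 * ∫⁻ x in F '' Set.univ, u x := by rw [key]
    _ ≤ 64 * ∫⁻ x, u x := mul_le_mul_right (setLIntegral_le_lintegral _ _) _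

/-- Abstract interpolation-of-flows estimate: if `W, W'` are volume-preserving `C¹`
diffeomorphisms of `ℝ⁶` that are uniformly `δ`-close and whose convex interpolants have
Jacobians within `1/2` of the identity, then `‖g∘W − g∘W'‖_{L¹} ≤ C δ ‖∇g‖_{L¹}`. -/
theorem stmt19 :
    ∃ C > 0, ∀ (g : EuclideanSpace ℝ (Fin 6) → ℝ)
      (W W' : EuclideanSpace ℝ (Fin 6) → EuclideanSpace ℝ (Fin 6)) (δ : ℝ),
      (∀ z, 0 ≤ g z) → ContDiff ℝ 1 g →
      ContDiff ℝ 1 W → ContDiff ℝ 1 W' →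
      Function.Bijective W → Function.Bijective W' →
      MeasurePreserving W volume volume → MeasurePreserving W' volume volume →
      (∀ z, ‖W z - W' z‖ ≤ δ) →
      (∀ θ ∈ Set.Icc (0 : ℝ) 1, ∀ z,
        ‖fderiv ℝ (fun y => θ • W y + (1 - θ) • W' y) z -
          ContinuousLinearMap.id ℝ (EuclideanSpace ℝ (Fin 6))‖ ≤ 1 / 2) →
      Integrable (fun z => ‖fderiv ℝ g z‖) →
      (∫ z, |g (W z) - g (W' z)|) ≤ C * δ * ∫ z, ‖fderiv ℝ g z‖ := by
  refine ⟨64, by norm_num, ?_⟩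
  intro g W W' δ hg0 hg hW hW' hWbij hW'bij hWmp hW'mp hδ hjac hint
  have hδ0 : 0 ≤ δ := le_trans (norm_nonneg _) (hδ 0)
  have hgc : Continuous g := hg.continuous
  have hg' : Continuous (fderiv ℝ g) := hg.continuous_fderiv one_ne_zero
  have hWc : Continuous W := hW.continuous
  have hW'c : Continuous W' := hW'.continuous
  set Wt : ℝ → E6 → E6 := fun θ y => θ • W y + (1 - θ) • W' y with hWtdef
  -- pointwise FTC bound
  have key : ∀ z, |g (W z) - g (W' z)| ≤ δ * ∫ θ in (0:ℝ)..1, ‖fderiv ℝ g (Wt θ z)‖ := by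
    intro z
    set p : ℝ → E6 := fun θ => Wt θ z with hpdef
    have hpc : Continuous p := by
      apply Continuous.add
      · exact continuous_id.smul continuous_const
      · exact (continuous_const.sub continuous_id).smul continuous_const
    have hpd : ∀ θ : ℝ, HasDerivAt p (W z - W' z) θ := by
      intro θ
      have h1 : HasDerivAt (fun t : ℝ => t • W z) ((1:ℝ) • W z) θ :=
        (hasDerivAt_id θ).smul_const (W z)
      have h2 : HasDerivAt (fun t : ℝ => (1 - t) • W' z) ((-1:ℝ) • W' z) θ := by
        have := ((hasDerivAt_id θ).const_sub (1:ℝ)).smul_const (W' z)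
        simpa using this
      have := h1.add h2
      exact this.congr_deriv (by simp [sub_eq_add_neg])
    have hφ : ∀ θ : ℝ,
        HasDerivAt (fun t => g (p t)) ((fderiv ℝ g (p θ)) (W z - W' z)) θ :=
      fun θ => ((hg.differentiable one_ne_zero (p θ)).hasFDerivAt).comp_hasDerivAt θ (hpd θ)
    have hcont : Continuous fun θ : ℝ => fderiv ℝ g (p θ) := hg'.comp hpc
    have hcont2 : Continuous fun θ : ℝ => (fderiv ℝ g (p θ)) (W z - W' z) :=
      hcont.clm_apply continuous_const
    have hftc := intervalIntegral.integral_eq_sub_of_hasDerivAt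
      (f := fun t => g (p t)) (fun t _ => hφ t) (hcont2.intervalIntegrable 0 1)
    have hp1 : p 1 = W z := by simp [hpdef, hWtdef]
    have hp0 : p 0 = W' z := by simp [hpdef, hWtdef]
    calc |g (W z) - g (W' z)|
        = ‖∫ θ in (0:ℝ)..1, (fderiv ℝ g (p θ)) (W z - W' z)‖ := by
          rw [hftc]
          simp only [hp1, hp0, Real.norm_eq_abs]
      _ ≤ ∫ θ in (0:ℝ)..1, ‖(fderiv ℝ g (p θ)) (W z - W' z)‖ :=
          intervalIntegral.norm_integral_le_integral_norm zero_le_one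
      _ ≤ ∫ θ in (0:ℝ)..1, ‖fderiv ℝ g (p θ)‖ * δ := by
          apply intervalIntegral.integral_mono_on zero_le_one
            (hcont2.norm.intervalIntegrable 0 1)
            ((hcont.norm.mul continuous_const).intervalIntegrable 0 1)
          intro θ _
          exact le_trans ((fderiv ℝ g (p θ)).le_opNorm _)
            (mul_le_mul_of_nonneg_left (hδ z) (norm_nonneg _))
      _ = δ * ∫ θ in (0:ℝ)..1, ‖fderiv ℝ g (p θ)‖ := by
          rw [intervalIntegral.integral_mul_const, mul_comm]
  -- continuity of the two-variable integrand
  have hjoint : Continuous fun q : E6 × ℝ => ENNReal.ofReal ‖fderiv ℝ g (Wt q.2 q.1)‖ := by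
    have hWtc : Continuous fun q : E6 × ℝ => Wt q.2 q.1 := by
      apply Continuous.add
      · exact continuous_snd.smul (hWc.comp continuous_fst)
      · exact (continuous_const.sub continuous_snd).smul (hW'c.comp continuous_fst)
    exact ENNReal.continuous_ofReal.comp ((hg'.comp hWtc).norm)
  have hDc : Continuous fun z => |g (W z) - g (W' z)| :=
    ((hgc.comp hWc).sub (hgc.comp hW'c)).abs
  set I := ∫ z, ‖fderiv ℝ g z‖ with hI
  have hI0 : (0:ℝ) ≤ I := integral_nonneg fun z => norm_nonneg _
  set L := ∫⁻ z, ENNReal.ofReal ‖fderiv ℝ g z‖ with hL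
  have hLI : L = ENNReal.ofReal I :=
    (ofReal_integral_eq_lintegral_ofReal hint
      (Filter.Eventually.of_forall fun z => norm_nonneg _)).symm
  -- per-theta change of variables bound
  have hθbound : ∀ θ ∈ Set.Icc (0:ℝ) 1,
      (∫⁻ z, ENNReal.ofReal ‖fderiv ℝ g (Wt θ z)‖) ≤ 64 * L := by
    intro θ hθ
    have hWtcd : ContDiff ℝ 1 (Wt θ) :=
      (hW.const_smul θ).add (hW'.const_smul (1 - θ))
    have hb : ∀ z, ‖fderiv ℝ (Wt θ) z - ContinuousLinearMap.id ℝ E6‖ ≤ 1/2 :=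
      fun z => hjac θ hθ z
    have hu : Measurable fun z : E6 => ENNReal.ofReal ‖fderiv ℝ g z‖ :=
      (ENNReal.continuous_ofReal.comp hg'.norm).measurable
    exact cov_le (Wt θ) hWtcd hb _ hu
  -- main lintegral estimate
  have hmain : (∫⁻ z, ENNReal.ofReal |g (W z) - g (W' z)|)
      ≤ ENNReal.ofReal δ * (64 * L) := by
    calc (∫⁻ z, ENNReal.ofReal |g (W z) - g (W' z)|)
        ≤ ∫⁻ z, ENNReal.ofReal δ *
            ∫⁻ θ in Set.Ioc (0:ℝ) 1, ENNReal.ofReal ‖fderiv ℝ g (Wt θ z)‖ := by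
          apply lintegral_mono
          intro z
          have hpc : Continuous fun θ : ℝ => Wt θ z := by
            apply Continuous.add
            · exact continuous_id.smul continuous_const
            · exact (continuous_const.sub continuous_id).smul continuous_const
          have hcontz : Continuous fun θ : ℝ => ‖fderiv ℝ g (Wt θ z)‖ :=
            (hg'.comp hpc).norm
          have hJeq : (∫ θ in (0:ℝ)..1, ‖fderiv ℝ g (Wt θ z)‖)
              = ∫ θ in Set.Ioc (0:ℝ) 1, ‖fderiv ℝ g (Wt θ z)‖ :=
            intervalIntegral.integral_of_le zero_le_one
          have hJint : IntegrableOn (fun θ : ℝ => ‖fderiv ℝ g (Wt θ z)‖)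
              (Set.Ioc (0:ℝ) 1) :=
            (intervalIntegrable_iff_integrableOn_Ioc_of_le zero_le_one).mp
              (hcontz.intervalIntegrable 0 1)
          have hJofReal : ENNReal.ofReal (∫ θ in Set.Ioc (0:ℝ) 1, ‖fderiv ℝ g (Wt θ z)‖)
              = ∫⁻ θ in Set.Ioc (0:ℝ) 1, ENNReal.ofReal ‖fderiv ℝ g (Wt θ z)‖ :=
            ofReal_integral_eq_lintegral_ofReal hJint
              (Filter.Eventually.of_forall fun θ => norm_nonneg _)
          calc ENNReal.ofReal |g (W z) - g (W' z)|
              ≤ ENNReal.ofReal (δ * ∫ θ in (0:ℝ)..1, ‖fderiv ℝ g (Wt θ z)‖) :=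
                ENNReal.ofReal_le_ofReal (key z)
            _ = ENNReal.ofReal δ *
                ENNReal.ofReal (∫ θ in (0:ℝ)..1, ‖fderiv ℝ g (Wt θ z)‖) :=
                ENNReal.ofReal_mul hδ0
            _ = ENNReal.ofReal δ *
                ∫⁻ θ in Set.Ioc (0:ℝ) 1, ENNReal.ofReal ‖fderiv ℝ g (Wt θ z)‖ := by
                rw [hJeq, hJofReal]
      _ = ENNReal.ofReal δ * ∫⁻ z, ∫⁻ θ in Set.Ioc (0:ℝ) 1,
            ENNReal.ofReal ‖fderiv ℝ g (Wt θ z)‖ :=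
          lintegral_const_mul' _ _ ENNReal.ofReal_ne_top
      _ = ENNReal.ofReal δ * ∫⁻ θ in Set.Ioc (0:ℝ) 1, ∫⁻ z,
            ENNReal.ofReal ‖fderiv ℝ g (Wt θ z)‖ := by
          congr 1
          apply lintegral_lintegral_swap
          exact (hjoint.measurable).aemeasurable
      _ ≤ ENNReal.ofReal δ * ∫⁻ _θ in Set.Ioc (0:ℝ) 1, (64 * L : ℝ≥0∞) := by
          apply mul_le_mul_right
          apply setLIntegral_mono measurable_const
          intro θ hθ
          exact hθbound θ ⟨le_of_lt hθ.1, hθ.2⟩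
      _ = ENNReal.ofReal δ * (64 * L) := by
          rw [setLIntegral_const, Real.volume_Ioc]
          simp
  -- conclude
  have hDeq : (∫ z, |g (W z) - g (W' z)|)
      = (∫⁻ z, ENNReal.ofReal |g (W z) - g (W' z)|).toReal :=
    integral_eq_lintegral_of_nonneg_ae
      (Filter.Eventually.of_forall fun z => abs_nonneg _) hDc.aestronglyMeasurable
  have hfin : ENNReal.ofReal δ * (64 * L) = ENNReal.ofReal (64 * δ * I) := by
    rw [hLI]
    rw [show (64:ℝ≥0∞) = ENNReal.ofReal (64:ℝ) by norm_num]
    rw [← ENNReal.ofReal_mul (by norm_num : (0:ℝ) ≤ 64)]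
    rw [← ENNReal.ofReal_mul hδ0]
    congr 1
    ring
  rw [hDeq]
  calc (∫⁻ z, ENNReal.ofReal |g (W z) - g (W' z)|).toReal
      ≤ (ENNReal.ofReal (64 * δ * I)).toReal := by
        apply ENNReal.toReal_mono ENNReal.ofReal_ne_top
        rw [← hfin]; exact hmain
    _ = 64 * δ * I := ENNReal.toReal_ofReal (by positivity)
end
end
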